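/- Let q = (B,i,j) ∈ 𝕄 and let ζ_ℝ = (ζ_ℝ^k) be a tuple of matrices ζ_ℝ^k ∈ End(V_k). If μ_ℝ(q)_k = ζ_ℝ^k and μ_ℂ(q)_k = 0 for every vertex k, then for every ξ ∈ ℂ the hyperkähler rotation q_ξ = HK_ξ(q) satisfies μ_ℝ(q_ξ)_k = (1 − |ξ|²)·ζ_ℝ^k and μ_ℂ(q_ξ)_k = −2i·ξ·ζ_ℝ^k for every vertex k. -/

import Mathlib

open Matrix Filter Topology

namespace QuiverCL

noncomputable section

variable {n : ℕ} {E : Type*}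

/-- Cast a matrix along equalities of vertices. -/
def castM2 (v : Fin n → ℕ) {a b a' b' : Fin n} (ea : a = a') (eb : b = b')
    (M : Matrix (Fin (v a)) (Fin (v b)) ℂ) : Matrix (Fin (v a')) (Fin (v b')) ℂ :=
  Matrix.reindex (finCongr (congrArg v ea)) (finCongr (congrArg v eb)) M

/-- The quiver representation space `𝕄`: a triple `(B, i, j)` of families of matrices,
`B h : V (src h) → V (tgt h)`, `i k : W k → V k`, `j k : V k → W k`
(matrices act on column vectors, so `Hom(V_a, V_b)` is `Matrix (Fin (v b)) (Fin (v a)) ℂ`). -/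
abbrev Rep (src tgt : E → Fin n) (v w : Fin n → ℕ) : Type _ :=
  (∀ h : E, Matrix (Fin (v (tgt h))) (Fin (v (src h))) ℂ)
  × (∀ k : Fin n, Matrix (Fin (v k)) (Fin (w k)) ℂ)
  × (∀ k : Fin n, Matrix (Fin (w k)) (Fin (v k)) ℂ)

/-- `ε(h) = 1` for `h ∈ Ω` and `ε(h) = -1` for `h ∈ Ω̄`. -/
def eps (Ω : E → Prop) [DecidablePred Ω] (h : E) : ℂ := if Ω h then 1 else -1

/-- The matrix `B_{h̄}` attached to the reversed edge, recast so that it is a matrix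
`V (tgt h) → V (src h)`. -/
def Bbar (src tgt : E → Fin n) (bar : E → E) (v w : Fin n → ℕ)
    (hbs : ∀ h, src (bar h) = tgt h) (hbt : ∀ h, tgt (bar h) = src h)
    (p : Rep src tgt v w) (h : E) : Matrix (Fin (v (src h))) (Fin (v (tgt h))) ℂ :=
  castM2 v (hbt h) (hbs h) (p.1 (bar h))

/-- The real moment map, componentwise:
`μ_ℝ(B,i,j)_k = (i/2)·[Σ_{in(h)=k} (B_h B_h† − B_{h̄}† B_{h̄}) + i_k i_k† − j_k† j_k]`. -/
def muR [Fintype E] (src tgt : E → Fin n) (bar : E → E) (v w : Fin n → ℕ)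
    (hbs : ∀ h, src (bar h) = tgt h) (hbt : ∀ h, tgt (bar h) = src h)
    (p : Rep src tgt v w) (k : Fin n) : Matrix (Fin (v k)) (Fin (v k)) ℂ :=
  (Complex.I / 2) •
    ((∑ h : E, if e : tgt h = k then
        castM2 v e e
          (p.1 h * (p.1 h)ᴴ -
            (Bbar src tgt bar v w hbs hbt p h)ᴴ * Bbar src tgt bar v w hbs hbt p h)
      else 0)
      + (p.2.1 k * (p.2.1 k)ᴴ - (p.2.2 k)ᴴ * p.2.2 k))

/-- The complex moment map, componentwise:
`μ_ℂ(B,i,j)_k = Σ_{in(h)=k} ε(h)·B_h B_{h̄} + i_k j_k`. -/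
def muC [Fintype E] (src tgt : E → Fin n) (bar : E → E) (Ω : E → Prop) [DecidablePred Ω]
    (v w : Fin n → ℕ)
    (hbs : ∀ h, src (bar h) = tgt h) (hbt : ∀ h, tgt (bar h) = src h)
    (p : Rep src tgt v w) (k : Fin n) : Matrix (Fin (v k)) (Fin (v k)) ℂ :=
  (∑ h : E, if e : tgt h = k then
      eps Ω h • castM2 v e e (p.1 h * Bbar src tgt bar v w hbs hbt p h)
    else 0)
    + p.2.1 k * p.2.2 k

/-- The hyperkähler rotation `HK_ξ(B,i,j) = (B_h − ε(h)·ξ·B_{h̄}†, i_k − ξ·j_k†, j_k + ξ·i_k†)`. -/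
def HK (src tgt : E → Fin n) (bar : E → E) (Ω : E → Prop) [DecidablePred Ω]
    (v w : Fin n → ℕ)
    (hbs : ∀ h, src (bar h) = tgt h) (hbt : ∀ h, tgt (bar h) = src h)
    (ξ : ℂ) (p : Rep src tgt v w) : Rep src tgt v w :=
  ⟨fun h => p.1 h - (eps Ω h * ξ) • (Bbar src tgt bar v w hbs hbt p h)ᴴ,
   fun k => p.2.1 k - ξ • (p.2.2 k)ᴴ,
   fun k => p.2.2 k + ξ • (p.2.1 k)ᴴ⟩

/-- The gauge action `g·(B,i,j) = (g_{in(h)} B_h g_{out(h)}⁻¹, g_k i_k, j_k g_k⁻¹)`. -/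
def gauge (src tgt : E → Fin n) (v w : Fin n → ℕ)
    (g : ∀ k : Fin n, Matrix (Fin (v k)) (Fin (v k)) ℂ) (p : Rep src tgt v w) :
    Rep src tgt v w :=
  ⟨fun h => g (tgt h) * p.1 h * (g (src h))⁻¹,
   fun k => g k * p.2.1 k,
   fun k => p.2.2 k * (g k)⁻¹⟩

/-- The infinitesimal gauge action `l_p(ξ) = (ξ_{in(h)} B_h − B_h ξ_{out(h)}, ξ_k i_k, −j_k ξ_k)`. -/
def lp (src tgt : E → Fin n) (v w : Fin n → ℕ)
    (p : Rep src tgt v w) (ξ : ∀ k : Fin n, Matrix (Fin (v k)) (Fin (v k)) ℂ) :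
    Rep src tgt v w :=
  ⟨fun h => ξ (tgt h) * p.1 h - p.1 h * ξ (src h),
   fun k => ξ k * p.2.1 k,
   fun k => -(p.2.2 k * ξ k)⟩

/-- The adjoint of the infinitesimal gauge action, componentwise:
`l_p^*(q)_k = Σ_{in(h)=k} (A_h B_h† − B_{h̄}† A_{h̄}) + I_k i_k† − j_k† J_k`. -/
def lpStar [Fintype E] (src tgt : E → Fin n) (bar : E → E) (v w : Fin n → ℕ)
    (hbs : ∀ h, src (bar h) = tgt h) (hbt : ∀ h, tgt (bar h) = src h)
    (p q : Rep src tgt v w) (k : Fin n) : Matrix (Fin (v k)) (Fin (v k)) ℂ :=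
  (∑ h : E, if e : tgt h = k then
      castM2 v e e
        (q.1 h * (p.1 h)ᴴ -
          (Bbar src tgt bar v w hbs hbt p h)ᴴ * Bbar src tgt bar v w hbs hbt q h)
    else 0)
    + (q.2.1 k * (p.2.1 k)ᴴ - (p.2.2 k)ᴴ * q.2.2 k)

/-- The hermitian inner product
`⟨q, q′⟩ = Σ_h Tr(A_h A′_h†) + Σ_k Tr(I_k I′_k†) + Σ_k Tr(J_k J′_k†)` on `𝕄`. -/
def innerRep [Fintype E] (src tgt : E → Fin n) (v w : Fin n → ℕ)
    (q q' : Rep src tgt v w) : ℂ :=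
  (∑ h : E, (q.1 h * (q'.1 h)ᴴ).trace)
    + (∑ k : Fin n, (q.2.1 k * (q'.2.1 k)ᴴ).trace)
    + (∑ k : Fin n, (q.2.2 k * (q'.2.2 k)ᴴ).trace)

/-- The complex symplectic form
`ω_ℂ(q, q′) = Σ_h ε(h)·Tr(A_h A′_{h̄}) + Σ_k Tr(I_k J′_k − I′_k J_k)`. -/
def omegaC [Fintype E] (src tgt : E → Fin n) (bar : E → E) (Ω : E → Prop) [DecidablePred Ω]
    (v w : Fin n → ℕ)
    (hbs : ∀ h, src (bar h) = tgt h) (hbt : ∀ h, tgt (bar h) = src h)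
    (q q' : Rep src tgt v w) : ℂ :=
  (∑ h : E, eps Ω h * (q.1 h * Bbar src tgt bar v w hbs hbt q' h).trace)
    + ∑ k : Fin n, ((q.2.1 k * q'.2.2 k).trace - (q'.2.1 k * q.2.2 k).trace)

/-- The scaling action `t∘(B,i,j)`: multiply the `Ω̄`-components and the `j`-components by `t`. -/
def scale (src tgt : E → Fin n) (Ω : E → Prop) [DecidablePred Ω] (v w : Fin n → ℕ)
    (t : ℂ) (p : Rep src tgt v w) : Rep src tgt v w :=
  ⟨fun h => if Ω h then p.1 h else t • p.1 h,
   fun k => p.2.1 k,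
   fun k => t • p.2.2 k⟩

/-- The second complex structure `J(m, m′) = (−(m′)†, m†)` on `𝕄 = 𝕄_Ω ⊕ 𝕄_Ω̄`. -/
def Jmap (src tgt : E → Fin n) (bar : E → E) (Ω : E → Prop) [DecidablePred Ω]
    (v w : Fin n → ℕ)
    (hbs : ∀ h, src (bar h) = tgt h) (hbt : ∀ h, tgt (bar h) = src h)
    (q : Rep src tgt v w) : Rep src tgt v w :=
  ⟨fun h => (-(eps Ω h)) • (Bbar src tgt bar v w hbs hbt q h)ᴴ,
   fun k => -((q.2.2 k)ᴴ),
   fun k => (q.2.1 k)ᴴ⟩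

/-- The point `p_A(ℏ)` of `𝕄`: for `h ∈ Ω` the `h`-component is `B⁰_h + A_h − ℏ·(B⁰_{h̄})†` and
for `h ∈ Ω̄` it is `ℏ⁻¹·(B⁰_h + A_h) + (B⁰_{h̄})†`; the `i`-components are
`i⁰_k + I_k − ℏ·(j⁰_k)†` and the `j`-components are `ℏ⁻¹·(j⁰_k + J_k) + (i⁰_k)†`. -/
def pA (src tgt : E → Fin n) (bar : E → E) (Ω : E → Prop) [DecidablePred Ω]
    (v w : Fin n → ℕ)
    (hbs : ∀ h, src (bar h) = tgt h) (hbt : ∀ h, tgt (bar h) = src h)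
    (p0 A : Rep src tgt v w) (ℏ : ℂ) : Rep src tgt v w :=
  ⟨fun h => if Ω h
      then p0.1 h + A.1 h - ℏ • (Bbar src tgt bar v w hbs hbt p0 h)ᴴ
      else ℏ⁻¹ • (p0.1 h + A.1 h) + (Bbar src tgt bar v w hbs hbt p0 h)ᴴ,
   fun k => p0.2.1 k + A.2.1 k - ℏ • (p0.2.2 k)ᴴ,
   fun k => ℏ⁻¹ • (p0.2.2 k + A.2.2 k) + (p0.2.1 k)ᴴ⟩

/-- The linearization of the real moment map equation:
`ℒ(p,ξ)_k = Σ_{in(h)=k} [B_h(B_h† ξ_{in(h)} − ξ_{out(h)} B_h†) −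
(B_{h̄}† ξ_{out(h)} − ξ_{in(h)} B_{h̄}†) B_{h̄}] + i_k i_k† ξ_k + ξ_k j_k† j_k`. -/
def linL [Fintype E] (src tgt : E → Fin n) (bar : E → E) (v w : Fin n → ℕ)
    (hbs : ∀ h, src (bar h) = tgt h) (hbt : ∀ h, tgt (bar h) = src h)
    (p : Rep src tgt v w) (ξ : ∀ k : Fin n, Matrix (Fin (v k)) (Fin (v k)) ℂ)
    (k : Fin n) : Matrix (Fin (v k)) (Fin (v k)) ℂ :=
  (∑ h : E, if e : tgt h = k then
      castM2 v e e
        (p.1 h * ((p.1 h)ᴴ * ξ (tgt h) - ξ (src h) * (p.1 h)ᴴ)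
          - ((Bbar src tgt bar v w hbs hbt p h)ᴴ * ξ (src h)
              - ξ (tgt h) * (Bbar src tgt bar v w hbs hbt p h)ᴴ)
            * Bbar src tgt bar v w hbs hbt p h)
    else 0)
    + (p.2.1 k * (p.2.1 k)ᴴ * ξ k + ξ k * (p.2.2 k)ᴴ * p.2.2 k)

/-- The product of the matrices of `p` along a list of edges `[h_1, …, h_m]`, as a matrix
`V_a → V_b`; when the list is a path with `a = out(h_1)` and `b = in(h_m)` this is the genuine
composite `B_{h_m} ⋯ B_{h_1}`. -/
def prodAlong (src tgt : E → Fin n) (v w : Fin n → ℕ) (p : Rep src tgt v w) :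
    List E → (a : Fin n) → (b : Fin n) → Matrix (Fin (v b)) (Fin (v a)) ℂ
  | [], a, b => if e : a = b then castM2 v e rfl (1 : Matrix (Fin (v a)) (Fin (v a)) ℂ) else 0
  | (h : E) :: rest, a, b =>
      prodAlong src tgt v w p rest (tgt h) b *
        (if e : src h = a then castM2 v rfl e (p.1 h) else 0)

section AuxLemmas

variable {v w : Fin n → ℕ}

lemma castM2_refl {a b : Fin n} (ea : a = a) (eb : b = b)
    (M : Matrix (Fin (v a)) (Fin (v b)) ℂ) : castM2 v ea eb M = M := by
  ext i j
  simp [castM2]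

lemma castM2_add {a b a' b' : Fin n} (ea : a = a') (eb : b = b')
    (M N : Matrix (Fin (v a)) (Fin (v b)) ℂ) :
    castM2 v ea eb (M + N) = castM2 v ea eb M + castM2 v ea eb N := by
  subst ea; subst eb; simp [castM2_refl]

lemma castM2_sub {a b a' b' : Fin n} (ea : a = a') (eb : b = b')
    (M N : Matrix (Fin (v a)) (Fin (v b)) ℂ) :
    castM2 v ea eb (M - N) = castM2 v ea eb M - castM2 v ea eb N := by
  subst ea; subst eb; simp [castM2_refl]

lemma castM2_smul {a b a' b' : Fin n} (ea : a = a') (eb : b = b') (c : ℂ)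
    (M : Matrix (Fin (v a)) (Fin (v b)) ℂ) :
    castM2 v ea eb (c • M) = c • castM2 v ea eb M := by
  subst ea; subst eb; simp [castM2_refl]

lemma castM2_neg {a b a' b' : Fin n} (ea : a = a') (eb : b = b')
    (M : Matrix (Fin (v a)) (Fin (v b)) ℂ) :
    castM2 v ea eb (-M) = - castM2 v ea eb M := by
  subst ea; subst eb; simp [castM2_refl]

lemma castM2_conjT {a b a' b' : Fin n} (ea : a = a') (eb : b = b')
    (M : Matrix (Fin (v a)) (Fin (v b)) ℂ) :
    (castM2 v ea eb M)ᴴ = castM2 v eb ea Mᴴ := by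
  subst ea; subst eb; simp [castM2_refl]

lemma castM2_trans {a b a' b' a'' b'' : Fin n} (ea : a = a') (eb : b = b')
    (ea' : a' = a'') (eb' : b' = b'')
    (M : Matrix (Fin (v a)) (Fin (v b)) ℂ) :
    castM2 v ea' eb' (castM2 v ea eb M) = castM2 v (ea.trans ea') (eb.trans eb') M := by
  subst ea; subst eb; subst ea'; subst eb'; simp [castM2_refl]

lemma eps_bar (bar : E → E) (Ω : E → Prop) [DecidablePred Ω]
    (hor : ∀ h, Ω (bar h) ↔ ¬ Ω h) (h : E) : eps Ω (bar h) = - eps Ω h := by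
  by_cases hh : Ω h
  · have : ¬ Ω (bar h) := fun c => ((hor h).mp c) hh
    simp [eps, hh, this]
  · have : Ω (bar h) := (hor h).mpr hh
    simp [eps, hh, this]

lemma star_eps (Ω : E → Prop) [DecidablePred Ω] (h : E) : star (eps Ω h) = eps Ω h := by
  by_cases hh : Ω h <;> simp [eps, hh]

section WithData

variable (src tgt : E → Fin n) (bar : E → E) (Ω : E → Prop) [DecidablePred Ω]
variable (hbs : ∀ h, src (bar h) = tgt h) (hbt : ∀ h, tgt (bar h) = src h)

lemma HK_fst (ξ : ℂ) (q : Rep src tgt v w) (h : E) :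
    (HK src tgt bar Ω v w hbs hbt ξ q).1 h
      = q.1 h - (eps Ω h * ξ) • (Bbar src tgt bar v w hbs hbt q h)ᴴ := rfl

lemma HK_i (ξ : ℂ) (q : Rep src tgt v w) (k : Fin n) :
    (HK src tgt bar Ω v w hbs hbt ξ q).2.1 k = q.2.1 k - ξ • (q.2.2 k)ᴴ := rfl

lemma HK_j (ξ : ℂ) (q : Rep src tgt v w) (k : Fin n) :
    (HK src tgt bar Ω v w hbs hbt ξ q).2.2 k = q.2.2 k + ξ • (q.2.1 k)ᴴ := rfl

lemma cast_edge (q : Rep src tgt v w) {h₁ h₂ : E} (e : h₁ = h₂)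
    (E1 : src h₁ = src h₂) (E2 : tgt h₁ = tgt h₂) :
    castM2 v E1 E2 ((q.1 h₁)ᴴ) = (q.1 h₂)ᴴ := by
  subst e; exact castM2_refl _ _ _

lemma Bbar_HK (hinv : ∀ h, bar (bar h) = h) (hor : ∀ h, Ω (bar h) ↔ ¬ Ω h)
    (ξ : ℂ) (q : Rep src tgt v w) (h : E) :
    Bbar src tgt bar v w hbs hbt (HK src tgt bar Ω v w hbs hbt ξ q) h
      = Bbar src tgt bar v w hbs hbt q h + (eps Ω h * ξ) • (q.1 h)ᴴ := by
  show castM2 v (hbt h) (hbs h) ((HK src tgt bar Ω v w hbs hbt ξ q).1 (bar h)) = _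
  rw [HK_fst, castM2_sub, castM2_smul]
  have h1 : castM2 v (hbt h) (hbs h)
      ((Bbar src tgt bar v w hbs hbt q (bar h))ᴴ) = (q.1 h)ᴴ := by
    rw [show Bbar src tgt bar v w hbs hbt q (bar h)
        = castM2 v (hbt (bar h)) (hbs (bar h)) (q.1 (bar (bar h))) from rfl]
    rw [castM2_conjT, castM2_trans]
    exact cast_edge src tgt q (hinv h) _ _
  rw [h1, eps_bar bar Ω hor]
  show Bbar src tgt bar v w hbs hbt q h - (-eps Ω h * ξ) • (q.1 h)ᴴ = _
  rw [neg_mul, neg_smul, sub_neg_eq_add]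

lemma claimR (hinv : ∀ h, bar (bar h) = h) (hor : ∀ h, Ω (bar h) ↔ ¬ Ω h)
    (ξ : ℂ) (q : Rep src tgt v w) (k : Fin n) (h : E) :
    (if e : tgt h = k then castM2 v e e
        ((HK src tgt bar Ω v w hbs hbt ξ q).1 h * ((HK src tgt bar Ω v w hbs hbt ξ q).1 h)ᴴ
          - (Bbar src tgt bar v w hbs hbt (HK src tgt bar Ω v w hbs hbt ξ q) h)ᴴ
            * Bbar src tgt bar v w hbs hbt (HK src tgt bar Ω v w hbs hbt ξ q) h)
      else 0)
    = (1 - ξ * star ξ) • (if e : tgt h = k then castM2 v e e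
          (q.1 h * (q.1 h)ᴴ
            - (Bbar src tgt bar v w hbs hbt q h)ᴴ * Bbar src tgt bar v w hbs hbt q h) else 0)
      - (2 * star ξ) • (if e : tgt h = k then
          eps Ω h • castM2 v e e (q.1 h * Bbar src tgt bar v w hbs hbt q h) else 0)
      - (2 * ξ) • (if e : tgt h = k then
          eps Ω h • castM2 v e e (q.1 h * Bbar src tgt bar v w hbs hbt q h) else 0)ᴴ := by
  rw [HK_fst, Bbar_HK src tgt bar Ω hbs hbt hinv hor]
  by_cases e : tgt h = k
  · simp only [dif_pos e]
    by_cases hΩ : Ω h <;>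
    · simp only [eps, hΩ, if_true, if_false, one_mul, neg_mul, one_smul, neg_smul,
        sub_neg_eq_add, ite_true, ite_false, neg_one_smul,
        conjTranspose_sub, conjTranspose_add, conjTranspose_smul, conjTranspose_neg,
        conjTranspose_conjTranspose, conjTranspose_mul,
        Matrix.sub_mul, Matrix.mul_sub, Matrix.add_mul, Matrix.mul_add,
        Matrix.smul_mul, Matrix.mul_smul, Matrix.neg_mul, Matrix.mul_neg, neg_neg,
        smul_smul, smul_sub, smul_add, smul_neg,
        castM2_sub, castM2_add, castM2_smul, castM2_neg, castM2_conjT, star_mul', star_star,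
        star_one, star_neg]
      module
  · simp only [dif_neg e, smul_zero, conjTranspose_zero, sub_zero, zero_sub, neg_zero]

lemma claimC (hinv : ∀ h, bar (bar h) = h) (hor : ∀ h, Ω (bar h) ↔ ¬ Ω h)
    (ξ : ℂ) (q : Rep src tgt v w) (k : Fin n) (h : E) :
    (if e : tgt h = k then eps Ω h • castM2 v e e
        ((HK src tgt bar Ω v w hbs hbt ξ q).1 h
          * Bbar src tgt bar v w hbs hbt (HK src tgt bar Ω v w hbs hbt ξ q) h)
      else 0)
    = (if e : tgt h = k then
          eps Ω h • castM2 v e e (q.1 h * Bbar src tgt bar v w hbs hbt q h) else 0)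
      + ξ • (if e : tgt h = k then castM2 v e e
          (q.1 h * (q.1 h)ᴴ
            - (Bbar src tgt bar v w hbs hbt q h)ᴴ * Bbar src tgt bar v w hbs hbt q h) else 0)
      - (ξ * ξ) • (if e : tgt h = k then
          eps Ω h • castM2 v e e (q.1 h * Bbar src tgt bar v w hbs hbt q h) else 0)ᴴ := by
  rw [HK_fst, Bbar_HK src tgt bar Ω hbs hbt hinv hor]
  by_cases e : tgt h = k
  · simp only [dif_pos e]
    by_cases hΩ : Ω h <;>
    · simp only [eps, hΩ, if_true, if_false, one_mul, neg_mul, one_smul, neg_smul,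
        sub_neg_eq_add, ite_true, ite_false, neg_one_smul,
        conjTranspose_sub, conjTranspose_add, conjTranspose_smul, conjTranspose_neg,
        conjTranspose_conjTranspose, conjTranspose_mul,
        Matrix.sub_mul, Matrix.mul_sub, Matrix.add_mul, Matrix.mul_add,
        Matrix.smul_mul, Matrix.mul_smul, Matrix.neg_mul, Matrix.mul_neg, neg_neg,
        smul_smul, smul_sub, smul_add, smul_neg,
        castM2_sub, castM2_add, castM2_smul, castM2_neg, castM2_conjT, star_mul', star_star,
        star_one, star_neg]
      module
  · simp [dif_neg e]

end WithData

end AuxLemmas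

/-- if `μ_ℝ(q) = ζ_ℝ` and `μ_ℂ(q) = 0`, then the hyperkähler rotation
`q_ξ = HK_ξ(q)` satisfies `μ_ℝ(q_ξ)_k = (1 − |ξ|²)·ζ_ℝ^k` and `μ_ℂ(q_ξ)_k = −2i·ξ·ζ_ℝ^k`. -/
theorem HK_moment_maps {n : ℕ} {E : Type*} [Fintype E]
    (src tgt : E → Fin n) (bar : E → E) (Ω : E → Prop) [DecidablePred Ω]
    (v w : Fin n → ℕ)
    (hloop : ∀ h, src h ≠ tgt h)
    (hinv : ∀ h, bar (bar h) = h) (hfree : ∀ h, bar h ≠ h)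
    (hbs : ∀ h, src (bar h) = tgt h) (hbt : ∀ h, tgt (bar h) = src h)
    (hor : ∀ h, Ω (bar h) ↔ ¬ Ω h)
    (ζ : ∀ k : Fin n, Matrix (Fin (v k)) (Fin (v k)) ℂ)
    (q : Rep src tgt v w)
    (hqR : ∀ k, muR src tgt bar v w hbs hbt q k = ζ k)
    (hqC : ∀ k, muC src tgt bar Ω v w hbs hbt q k = 0)
    (ξ : ℂ) :
    (∀ k, muR src tgt bar v w hbs hbt (HK src tgt bar Ω v w hbs hbt ξ q) k
        = ((1 : ℂ) - ((‖ξ‖ : ℝ) : ℂ) ^ 2) • ζ k)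
    ∧ (∀ k, muC src tgt bar Ω v w hbs hbt (HK src tgt bar Ω v w hbs hbt ξ q) k
        = (-(2 * Complex.I * ξ)) • ζ k) := by
  have habs : (((‖ξ‖ : ℝ) : ℂ)) ^ 2 = ξ * star ξ := by
    rw [show (((‖ξ‖ : ℝ) : ℂ)) ^ 2 = ((‖ξ‖ ^ 2 : ℝ) : ℂ) by push_cast; ring,
      Complex.sq_norm]
    exact (Complex.mul_conj ξ).symm
  have hZ : ∀ k, (∑ h : E, if e : tgt h = k then
      eps Ω h • castM2 v e e (q.1 h * Bbar src tgt bar v w hbs hbt q h) else 0)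
      = -(q.2.1 k * q.2.2 k) := by
    intro k
    have hc := hqC k
    rw [muC] at hc
    exact eq_neg_of_add_eq_zero_left hc
  constructor
  · intro k
    rw [← hqR k]
    simp only [muR]
    rw [Finset.sum_congr rfl (fun h _ => claimR src tgt bar Ω hbs hbt hinv hor ξ q k h)]
    rw [HK_i, HK_j]
    rw [Finset.sum_sub_distrib, Finset.sum_sub_distrib]
    simp only [← Finset.smul_sum, ← Matrix.conjTranspose_sum]
    rw [hZ k, habs]
    simp only [conjTranspose_neg, conjTranspose_sub, conjTranspose_add, conjTranspose_smul,
      conjTranspose_conjTranspose, conjTranspose_mul,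
      Matrix.sub_mul, Matrix.mul_sub, Matrix.add_mul, Matrix.mul_add,
      Matrix.smul_mul, Matrix.mul_smul, Matrix.neg_mul, Matrix.mul_neg, neg_neg,
      smul_smul, smul_sub, smul_add, smul_neg, star_mul', star_star, star_one, star_neg]
    module
  · intro k
    rw [← hqR k]
    simp only [muC, muR]
    rw [Finset.sum_congr rfl (fun h _ => claimC src tgt bar Ω hbs hbt hinv hor ξ q k h)]
    rw [HK_i, HK_j]
    rw [Finset.sum_sub_distrib, Finset.sum_add_distrib]
    simp only [← Finset.smul_sum, ← Matrix.conjTranspose_sum]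
    rw [hZ k, smul_smul]
    rw [show -(2 * Complex.I * ξ) * (Complex.I / 2) = ξ by
      linear_combination (-ξ) * Complex.I_mul_I]
    simp only [conjTranspose_neg, conjTranspose_sub, conjTranspose_add, conjTranspose_smul,
      conjTranspose_conjTranspose, conjTranspose_mul,
      Matrix.sub_mul, Matrix.mul_sub, Matrix.add_mul, Matrix.mul_add,
      Matrix.smul_mul, Matrix.mul_smul, Matrix.neg_mul, Matrix.mul_neg, neg_neg,
      smul_smul, smul_sub, smul_add, smul_neg, star_mul', star_star, star_one, star_neg]
    module

end

end QuiverCL
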